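/- Let σ ∈ S_k and τ ∈ S_n with k < n, let ⟨σ⟩ be an occurrence of σ in τ, and suppose every maximal group of similar letters of τ ∖ ⟨σ⟩ lies in a single region; let x be a letter of τ ∖ ⟨σ⟩ that is not similar to any other letter in its region. Then the poset I(⟨σ⟩, τ) is isomorphic (as a graded set, preserving rank parity) to the disjoint union I(⟨σ⟩, τ ∖ {x}) ⊔ I(⟨σ⟩ + x, τ), according to whether an element of I(⟨σ⟩, τ) includes the letter x or not. -/

import Mathlib

/-- `f` gives an occurrence of the pattern `σ` in `τ`: the positions `f 0 < f 1 < ⋯`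
carry letters of `τ` in the same relative order as `σ`. -/
def IsOccurrence {k n : ℕ} (σ : Equiv.Perm (Fin k)) (τ : Equiv.Perm (Fin n))
    (f : Fin k → Fin n) : Prop :=
  StrictMono f ∧ ∀ i j : Fin k, σ i < σ j ↔ τ (f i) < τ (f j)

/-- Two sets of kept positions `S, S'` (each containing the marked positions `A`)
determine the same element of the occurrence poset: the words of `τ` read along `S`
and along `S'` are order isomorphic, with the marked positions corresponding. -/
def OccEquiv {n : ℕ} (τ : Equiv.Perm (Fin n)) (A S S' : Finset (Fin n)) : Prop :=
  ∃ g : {x // x ∈ S} ≃o {x // x ∈ S'},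
    (∀ a b : {x // x ∈ S}, τ a.1 < τ b.1 ↔ τ (g a).1 < τ (g b).1) ∧
    (∀ a : {x // x ∈ S}, a.1 ∈ A ↔ (g a).1 ∈ A)

/-- Representatives of elements of the occurrence poset with marked positions `A`
and ground set `U`: sets of kept positions between `A` and `U`. -/
def OccCarrier {n : ℕ} (A U : Finset (Fin n)) := {S : Finset (Fin n) // A ⊆ S ∧ S ⊆ U}

/-- The occurrence poset `[⟨σ⟩, τ]` (with ground set `U`): kept-position sets modulo
order isomorphism respecting the marked occurrence. -/
def OccPoset {n : ℕ} (τ : Equiv.Perm (Fin n)) (A U : Finset (Fin n)) :=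
  Quot (fun S S' : OccCarrier A U => OccEquiv τ A S.1 S'.1)

def occMk {n : ℕ} (τ : Equiv.Perm (Fin n)) (A U : Finset (Fin n)) (S : OccCarrier A U) :
    OccPoset τ A U :=
  Quot.mk _ S

/-- The partial order of the occurrence poset: deletion of unmarked letters. -/
def occLE {n : ℕ} (τ : Equiv.Perm (Fin n)) (A U : Finset (Fin n))
    (q q' : OccPoset τ A U) : Prop :=
  ∃ S S' : OccCarrier A U, q = occMk τ A U S ∧ q' = occMk τ A U S' ∧ S.1 ⊆ S'.1

/-- The bottom element `⟨σ⟩` of the occurrence poset. -/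
def occBot {n : ℕ} (τ : Equiv.Perm (Fin n)) (A U : Finset (Fin n)) (h : A ⊆ U) :
    OccPoset τ A U :=
  occMk τ A U ⟨A, subset_rfl, h⟩

/-- The top element `τ` of the occurrence poset. -/
def occTop {n : ℕ} (τ : Equiv.Perm (Fin n)) (A U : Finset (Fin n)) (h : A ⊆ U) :
    OccPoset τ A U :=
  occMk τ A U ⟨U, h, subset_rfl⟩

/-- `J` is an interval block of the pattern of `τ` restricted to the kept positions `S`:
`J` consists of at least two kept positions, consecutive among `S` both in position and
in value. -/
def IsBlockIn {n : ℕ} (τ : Equiv.Perm (Fin n)) (S J : Finset (Fin n)) : Prop :=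
  J ⊆ S ∧ 2 ≤ J.card ∧
    (∀ x ∈ J, ∀ y ∈ J, ∀ z ∈ S, x ≤ z → z ≤ y → z ∈ J) ∧
    (∀ x ∈ J, ∀ y ∈ J, ∀ z ∈ S, τ x ≤ τ z → τ z ≤ τ y → z ∈ J)

/-- The pair (marked occurrence `A`, permutation given by kept positions `S`) has an
interval block: an interval block disjoint from the occurrence. -/
def PairHasBlock {n : ℕ} (τ : Equiv.Perm (Fin n)) (A S : Finset (Fin n)) : Prop :=
  ∃ J : Finset (Fin n), IsBlockIn τ S J ∧ ∀ p ∈ J, p ∉ A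

/-- An element of the occurrence poset is interval free if (a representative of) it has
no interval block disjoint from the marked occurrence. -/
def occIntervalFree {n : ℕ} (τ : Equiv.Perm (Fin n)) (A U : Finset (Fin n))
    (q : OccPoset τ A U) : Prop :=
  ∃ S : OccCarrier A U, q = occMk τ A U S ∧ ¬ PairHasBlock τ A S.1

theorem OccEquiv.card_eq {n : ℕ} {τ : Equiv.Perm (Fin n)} {A S S' : Finset (Fin n)}
    (h : OccEquiv τ A S S') : S.card = S'.card := by
  obtain ⟨g, -, -⟩ := h
  simpa using Fintype.card_congr g.toEquiv

/-- The rank of an element of the occurrence poset: its number of letters minus `k`. -/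
def occRank {n : ℕ} (τ : Equiv.Perm (Fin n)) (A U : Finset (Fin n)) (k : ℕ) :
    OccPoset τ A U → ℕ :=
  Quot.lift (fun S => S.1.card - k) (fun S S' h => by
    have hc := OccEquiv.card_eq h
    show S.1.card - k = S'.1.card - k
    omega)

/-- Positions `p` and `q` lie in the same region: no position between them (inclusive)
is a marked position. -/
def SameRegion {n : ℕ} (A : Finset (Fin n)) (p q : Fin n) : Prop :=
  ∀ z : Fin n, min p q ≤ z → z ≤ max p q → z ∉ A

/-- The pair (occurrence with marked positions `A`, `τ`) is separated: any two letters in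
the same region are separated in value by a letter of the occurrence. -/
def Separated {n : ℕ} (τ : Equiv.Perm (Fin n)) (A : Finset (Fin n)) : Prop :=
  ∀ p q : Fin n, SameRegion A p q → τ p < τ q → ∃ a ∈ A, τ p < τ a ∧ τ a < τ q

/-- The letters at positions `p, q` (with `τ p < τ q`) are similar: same region, and no
letter of the occurrence lies strictly between them in value. -/
def SimilarPos {n : ℕ} (τ : Equiv.Perm (Fin n)) (A : Finset (Fin n)) (p q : Fin n) : Prop :=
  SameRegion A p q ∧ τ p < τ q ∧ ∀ a ∈ A, ¬ (τ p < τ a ∧ τ a < τ q)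

/-- A group of similar letters: at least two letters, pairwise similar. -/
def IsSimilarGroup {n : ℕ} (τ : Equiv.Perm (Fin n)) (A : Finset (Fin n))
    (G : Finset (Fin n)) : Prop :=
  2 ≤ G.card ∧ ∀ p ∈ G, ∀ q ∈ G, τ p < τ q → SimilarPos τ A p q

/-- A maximal group of similar letters: one contained in no strictly larger group. -/
def IsMaxSimilarGroup {n : ℕ} (τ : Equiv.Perm (Fin n)) (A : Finset (Fin n))
    (G : Finset (Fin n)) : Prop :=
  IsSimilarGroup τ A G ∧ ∀ G' : Finset (Fin n), IsSimilarGroup τ A G' → G ⊆ G' → G' = G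

/-- The occurrence poset is a boolean algebra: isomorphic to the poset of all subsets of
a finite set, ordered by inclusion. -/
def IsBooleanOccPoset {n : ℕ} (τ : Equiv.Perm (Fin n)) (A U : Finset (Fin n)) : Prop :=
  ∃ (m : ℕ) (e : OccPoset τ A U ≃ Finset (Fin m)),
    ∀ q q' : OccPoset τ A U, occLE τ A U q q' ↔ e q ⊆ e q'

/-- The pattern poset `P`: permutations of every length, a permutation of length `m` being
an element of `Equiv.Perm (Fin m)` (its standard form). -/
def PatternPoset := Σ m : ℕ, Equiv.Perm (Fin m)

/-- The order of the pattern poset: pattern containment. -/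
def patternLE (a b : PatternPoset) : Prop :=
  ∃ f : Fin a.1 → Fin b.1, IsOccurrence a.2 b.2 f

/-- `b` covers `a` in the pattern poset: `a < b` and `b` has one letter more than `a`. -/
def patternCovers (a b : PatternPoset) : Prop :=
  patternLE a b ∧ a ≠ b ∧ b.1 = a.1 + 1



section Aux

lemma strictMono_fix {α : Type*} [LinearOrder α] [Fintype α] {φ : α → α}
    (h : StrictMono φ) (x : α) : φ x = x := by
  have hsurj : Function.Surjective φ := Finite.surjective_of_injective h.injective
  have he := Subsingleton.elim (StrictMono.orderIsoOfSurjective φ h hsurj) (OrderIso.refl α)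
  calc φ x = (StrictMono.orderIsoOfSurjective φ h hsurj) x := rfl
    _ = x := by rw [he]; rfl

variable {n : ℕ}

lemma memFix {B S S' : Finset (Fin n)} (hBS : B ⊆ S) (hBS' : B ⊆ S')
    (g : {x // x ∈ S} ≃o {x // x ∈ S'})
    (hg : ∀ a : {x // x ∈ S}, a.1 ∈ B ↔ (g a).1 ∈ B) :
    ∀ a : {x // x ∈ S}, a.1 ∈ B → ((g a).1 : Fin n) = a.1 := by
  have hmono : StrictMono (fun b : {x // x ∈ B} =>
      (⟨(g ⟨b.1, hBS b.2⟩).1, (hg _).1 b.2⟩ : {x // x ∈ B})) := by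
    intro b b' hbb
    have h1 : (⟨b.1, hBS b.2⟩ : {x // x ∈ S}) < ⟨b'.1, hBS b'.2⟩ :=
      Subtype.mk_lt_mk.mpr (Subtype.coe_lt_coe.mpr hbb)
    have h2 := g.lt_iff_lt.mpr h1
    exact Subtype.mk_lt_mk.mpr (Subtype.coe_lt_coe.mpr h2)
  intro a ha
  have := strictMono_fix hmono ⟨a.1, ha⟩
  exact congrArg Subtype.val this

lemma occEquiv_symm {τ : Equiv.Perm (Fin n)} {B S S' : Finset (Fin n)}
    (h : OccEquiv τ B S S') : OccEquiv τ B S' S := by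
  obtain ⟨g, hτ, hg⟩ := h
  refine ⟨g.symm, fun a b => ?_, fun a => ?_⟩
  · have := hτ (g.symm a) (g.symm b)
    rwa [g.apply_symm_apply, g.apply_symm_apply, iff_comm] at this
  · have := hg (g.symm a)
    rwa [g.apply_symm_apply, iff_comm] at this

variable {τ : Equiv.Perm (Fin n)} {A : Finset (Fin n)} {x₀ : Fin n}

/-- `g` maps `x₀` to `x₀`. -/
lemma gfix_x0 (hx₀ : x₀ ∉ A)
    (hxnotsim : ∀ q : Fin n, ¬ SimilarPos τ A x₀ q ∧ ¬ SimilarPos τ A q x₀)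
    {S S' : Finset (Fin n)} (hAS : A ⊆ S) (hAS' : A ⊆ S')
    (g : {x // x ∈ S} ≃o {x // x ∈ S'})
    (hτg : ∀ a b : {x // x ∈ S}, τ a.1 < τ b.1 ↔ τ (g a).1 < τ (g b).1)
    (hg : ∀ a : {x // x ∈ S}, a.1 ∈ A ↔ (g a).1 ∈ A)
    (hx : x₀ ∈ S) : ((g ⟨x₀, hx⟩).1 : Fin n) = x₀ := by
  have hfix := memFix hAS hAS' g hg
  set y : Fin n := (g ⟨x₀, hx⟩).1 with hy
  have hyA : y ∉ A := fun h => hx₀ ((hg _).2 h)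
  have hreg : SameRegion A x₀ y := by
    intro z hz1 hz2 hzA
    have hzS : z ∈ S := hAS hzA
    have hzfix : ((g ⟨z, hzS⟩).1 : Fin n) = z := hfix ⟨z, hzS⟩ hzA
    rcases lt_trichotomy z x₀ with h | h | h
    · have : (⟨z, hzS⟩ : {x // x ∈ S}) < ⟨x₀, hx⟩ := Subtype.mk_lt_mk.mpr h
      have h2 : z < y := by
        have := g.lt_iff_lt.mpr this
        have := Subtype.coe_lt_coe.mpr this
        rwa [hzfix] at this
      have hzy : min x₀ y ≤ z := hz1
      rcases le_total x₀ y with hc | hc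
      · rw [min_eq_left hc] at hzy; exact absurd hzy (not_le.mpr h)
      · rw [min_eq_right hc] at hzy; exact absurd hzy (not_le.mpr h2)
    · exact hx₀ (h ▸ hzA)
    · have : (⟨x₀, hx⟩ : {x // x ∈ S}) < ⟨z, hzS⟩ := Subtype.mk_lt_mk.mpr h
      have h2 : y < z := by
        have := g.lt_iff_lt.mpr this
        have := Subtype.coe_lt_coe.mpr this
        rwa [hzfix] at this
      have hzy : z ≤ max x₀ y := hz2
      rcases le_total x₀ y with hc | hc
      · rw [max_eq_right hc] at hzy; exact absurd hzy (not_le.mpr h2)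
      · rw [max_eq_left hc] at hzy; exact absurd hzy (not_le.mpr h)
  have hval : ∀ a ∈ A, (τ x₀ < τ a ↔ τ y < τ a) := by
    intro a haA
    have := hτg ⟨x₀, hx⟩ ⟨a, hAS haA⟩
    rwa [hfix ⟨a, hAS haA⟩ haA] at this
  rcases lt_trichotomy (τ x₀) (τ y) with h | h | h
  · exact absurd ⟨hreg, h, fun a haA ⟨h1, h2⟩ => absurd ((hval a haA).mp h1) (not_lt.mpr h2.le)⟩
      (hxnotsim y).1
  · exact τ.injective h.symm ▸ rfl
  · refine absurd ⟨fun z h1 h2 => hreg z ?_ ?_, h, fun a haA ⟨h1, h2⟩ =>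
      absurd ((hval a haA).mpr h1) (not_lt.mpr h2.le)⟩ (hxnotsim y).2
    · rwa [min_comm]
    · rwa [max_comm]

lemma occEquiv_x0 (hx₀ : x₀ ∉ A)
    (hxnotsim : ∀ q : Fin n, ¬ SimilarPos τ A x₀ q ∧ ¬ SimilarPos τ A q x₀)
    {S S' : Finset (Fin n)} (hAS : A ⊆ S) (hAS' : A ⊆ S')
    (h : OccEquiv τ A S S') (hx : x₀ ∈ S) :
    x₀ ∈ S' ∧ OccEquiv τ (insert x₀ A) S S' := by
  obtain ⟨g, hτg, hg⟩ := h
  have hfixx := gfix_x0 hx₀ hxnotsim hAS hAS' g hτg hg hx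
  have hxS' : x₀ ∈ S' := hfixx ▸ (g ⟨x₀, hx⟩).2
  refine ⟨hxS', g, hτg, fun a => ?_⟩
  simp only [Finset.mem_insert]
  constructor
  · rintro (h1 | h1)
    · left
      have : a = ⟨x₀, hx⟩ := Subtype.ext h1
      rw [this, hfixx]
    · exact Or.inr ((hg a).mp h1)
  · rintro (h1 | h1)
    · left
      have : g a = g ⟨x₀, hx⟩ := Subtype.ext (h1.trans hfixx.symm)
      exact congrArg Subtype.val (g.injective this)
    · exact Or.inr ((hg a).mpr h1)

lemma occEquiv_notmem (hx₀ : x₀ ∉ A)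
    (hxnotsim : ∀ q : Fin n, ¬ SimilarPos τ A x₀ q ∧ ¬ SimilarPos τ A q x₀)
    {S S' : Finset (Fin n)} (hAS : A ⊆ S) (hAS' : A ⊆ S')
    (h : OccEquiv τ A S S') (hx : x₀ ∉ S) : x₀ ∉ S' :=
  fun hx' => hx (occEquiv_x0 hx₀ hxnotsim hAS' hAS (occEquiv_symm h) hx').1

lemma occEquiv_unmark (hx₀ : x₀ ∉ A)
    {S S' : Finset (Fin n)} (hAS : insert x₀ A ⊆ S) (hAS' : insert x₀ A ⊆ S')
    (h : OccEquiv τ (insert x₀ A) S S') : OccEquiv τ A S S' := by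
  obtain ⟨g, hτg, hg⟩ := h
  have hfix := memFix hAS hAS' g hg
  refine ⟨g, hτg, fun a => ?_⟩
  constructor
  · intro h1
    rw [hfix a (Finset.mem_insert_of_mem h1)]
    exact h1
  · intro h1
    have h2 : a.1 ∈ insert x₀ A := (hg a).mpr (Finset.mem_insert_of_mem h1)
    rcases Finset.mem_insert.mp h2 with h3 | h3
    · exfalso
      rw [hfix a h2, h3] at h1
      exact hx₀ h1
    · exact h3

lemma block_mono {S : Finset (Fin n)} :
    PairHasBlock τ (insert x₀ A) S → PairHasBlock τ A S := by
  rintro ⟨J, hJ, hd⟩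
  exact ⟨J, hJ, fun p hp hpA => hd p hp (Finset.mem_insert_of_mem hpA)⟩

lemma block_insert
    (hxnotsim : ∀ q : Fin n, ¬ SimilarPos τ A x₀ q ∧ ¬ SimilarPos τ A q x₀)
    {S : Finset (Fin n)} (hAS : A ⊆ S) :
    PairHasBlock τ A S → PairHasBlock τ (insert x₀ A) S := by
  rintro ⟨J, ⟨hJS, hcard, hpos, hval⟩, hd⟩
  by_cases hx : x₀ ∈ J
  · exfalso
    obtain ⟨y, hyJ, hyx⟩ := Finset.exists_mem_ne hcard x₀
    have hreg : SameRegion A x₀ y := by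
      intro z h1 h2 hzA
      have hzS : z ∈ S := hAS hzA
      rcases le_total x₀ y with hc | hc
      · exact hd z (hpos x₀ hx y hyJ z hzS (by rwa [min_eq_left hc] at h1)
          (by rwa [max_eq_right hc] at h2)) hzA
      · exact hd z (hpos y hyJ x₀ hx z hzS (by rwa [min_eq_right hc] at h1)
          (by rwa [max_eq_left hc] at h2)) hzA
    rcases lt_trichotomy (τ x₀) (τ y) with h | h | h
    · exact (hxnotsim y).1 ⟨hreg, h, fun a haA ⟨h1, h2⟩ =>
        hd a (hval x₀ hx y hyJ a (hAS haA) h1.le h2.le) haA⟩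
    · exact hyx (τ.injective h.symm)
    · refine (hxnotsim y).2 ⟨fun z h1 h2 => hreg z ?_ ?_, h, fun a haA ⟨h1, h2⟩ =>
        hd a (hval y hyJ x₀ hx a (hAS haA) h1.le h2.le) haA⟩
      · rwa [min_comm]
      · rwa [max_comm]
  · refine ⟨J, ⟨hJS, hcard, hpos, hval⟩, fun p hp hpA => ?_⟩
    rcases Finset.mem_insert.mp hpA with h1 | h1
    · exact hx (h1 ▸ hp)
    · exact hd p hp h1

end Aux

section Main

variable {n : ℕ} (τ : Equiv.Perm (Fin n)) (A : Finset (Fin n)) (x₀ : Fin n)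

def PhiRep (S : OccCarrier A (Finset.univ : Finset (Fin n))) :
    OccPoset τ A (Finset.univ.erase x₀) ⊕ OccPoset τ (insert x₀ A) Finset.univ :=
  if hx : x₀ ∈ S.1 then
    Sum.inr (occMk τ (insert x₀ A) Finset.univ ⟨S.1, Finset.insert_subset hx S.2.1, S.2.2⟩)
  else
    Sum.inl (occMk τ A (Finset.univ.erase x₀) ⟨S.1, S.2.1, fun z hz =>
      Finset.mem_erase.mpr ⟨fun h => hx (h ▸ hz), Finset.mem_univ z⟩⟩)

variable (hx₀ : x₀ ∉ A)
    (hxnotsim : ∀ q : Fin n, ¬ SimilarPos τ A x₀ q ∧ ¬ SimilarPos τ A q x₀)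

def Phi : OccPoset τ A Finset.univ →
    OccPoset τ A (Finset.univ.erase x₀) ⊕ OccPoset τ (insert x₀ A) Finset.univ :=
  Quot.lift (PhiRep τ A x₀) (by
    intro S S' h
    by_cases hx : x₀ ∈ S.1
    · obtain ⟨hx', hins⟩ := occEquiv_x0 hx₀ hxnotsim S.2.1 S'.2.1 h hx
      unfold PhiRep
      rw [dif_pos hx, dif_pos hx']
      exact congrArg Sum.inr (Quot.sound hins)
    · have hx' := occEquiv_notmem hx₀ hxnotsim S.2.1 S'.2.1 h hx
      unfold PhiRep
      rw [dif_neg hx, dif_neg hx']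
      exact congrArg Sum.inl (Quot.sound h))

def Psi1 : OccPoset τ A (Finset.univ.erase x₀) → OccPoset τ A Finset.univ :=
  Quot.lift (fun S => occMk τ A Finset.univ ⟨S.1, S.2.1, Finset.subset_univ _⟩)
    (fun _ _ h => Quot.sound h)

def Psi2 : OccPoset τ (insert x₀ A) Finset.univ → OccPoset τ A Finset.univ :=
  Quot.lift (fun S => occMk τ A Finset.univ
      ⟨S.1, (Finset.subset_insert x₀ A).trans S.2.1, S.2.2⟩)
    (fun S S' h => Quot.sound (occEquiv_unmark hx₀ S.2.1 S'.2.1 h))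

def PhiEquiv : OccPoset τ A Finset.univ ≃
    (OccPoset τ A (Finset.univ.erase x₀) ⊕ OccPoset τ (insert x₀ A) Finset.univ) where
  toFun := Phi τ A x₀ hx₀ hxnotsim
  invFun := Sum.elim (Psi1 τ A x₀) (Psi2 τ A x₀ hx₀)
  left_inv := by
    apply Quot.ind
    intro S
    show Sum.elim _ _ (PhiRep τ A x₀ S) = _
    by_cases hx : x₀ ∈ S.1
    · rw [PhiRep.eq_def, dif_pos hx]; rfl
    · rw [PhiRep.eq_def, dif_neg hx]; rfl
  right_inv := by
    rintro (q | q)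
    · induction q using Quot.ind with
      | _ S =>
        show PhiRep τ A x₀ _ = _
        refine (dif_neg (fun h => (Finset.mem_erase.mp (S.2.2 h)).1 rfl)).trans ?_
        rfl
    · induction q using Quot.ind with
      | _ S =>
        show PhiRep τ A x₀ _ = _
        refine (dif_pos (S.2.1 (Finset.mem_insert_self x₀ A))).trans ?_
        rfl

lemma freeIff (q : OccPoset τ A Finset.univ) :
    occIntervalFree τ A Finset.univ q ↔
      Sum.elim (occIntervalFree τ A (Finset.univ.erase x₀))
        (occIntervalFree τ (insert x₀ A) Finset.univ)
        (PhiEquiv τ A x₀ hx₀ hxnotsim q) := by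
  constructor
  · rintro ⟨S, rfl, hfree⟩
    show Sum.elim _ _ (PhiRep τ A x₀ S)
    by_cases hx : x₀ ∈ S.1
    · rw [PhiRep.eq_def, dif_pos hx]
      exact ⟨_, rfl, fun hb => hfree (block_mono hb)⟩
    · rw [PhiRep.eq_def, dif_neg hx]
      exact ⟨_, rfl, hfree⟩
  · induction q using Quot.ind with
    | _ S =>
      intro h
      replace h : Sum.elim _ _ (PhiRep τ A x₀ S) := h
      by_cases hx : x₀ ∈ S.1
      · rw [PhiRep.eq_def, dif_pos hx] at h
        obtain ⟨T', heq, hfree'⟩ := h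
        have hψ := congrArg (Psi2 τ A x₀ hx₀) heq
        refine ⟨⟨T'.1, (Finset.subset_insert x₀ A).trans T'.2.1, T'.2.2⟩, hψ, fun hb => ?_⟩
        exact hfree' (block_insert hxnotsim ((Finset.subset_insert x₀ A).trans T'.2.1) hb)
      · rw [PhiRep.eq_def, dif_neg hx] at h
        obtain ⟨T', heq, hfree'⟩ := h
        have hψ := congrArg (Psi1 τ A x₀) heq
        exact ⟨⟨T'.1, T'.2.1, Finset.subset_univ _⟩, hψ, hfree'⟩

lemma subtypeSum_eq_inl {α β : Type*} {p : α ⊕ β → Prop} (c : {c // p c})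
    (x : {a // p (Sum.inl a)}) (h : Equiv.subtypeSum c = Sum.inl x) :
    c.1 = Sum.inl x.1 := by
  obtain ⟨a | b, hc⟩ := c
  · cases h; rfl
  · cases h

lemma subtypeSum_eq_inr {α β : Type*} {p : α ⊕ β → Prop} (c : {c // p c})
    (x : {b // p (Sum.inr b)}) (h : Equiv.subtypeSum c = Sum.inr x) :
    c.1 = Sum.inr x.1 := by
  obtain ⟨a | b, hc⟩ := c
  · cases h
  · cases h; rfl

lemma elim_subtypeSum {α β : Type*} {p : α ⊕ β → Prop} (f : α → Prop) (g : β → Prop)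
    (c : {c // p c}) :
    Sum.elim (fun x : {a // p (Sum.inl a)} => f x.1) (fun y : {b // p (Sum.inr b)} => g y.1)
      (Equiv.subtypeSum c) = Sum.elim f g c.1 := by
  obtain ⟨a | b, hc⟩ := c <;> rfl

end Main


/-- if every maximal group of similar letters of `τ ∖ ⟨σ⟩` lies in a single
region, and `x₀` is a letter of `τ ∖ ⟨σ⟩` not similar to any other letter in its region,
then `I(⟨σ⟩, τ)` is isomorphic, as a graded set preserving rank parity, to the disjoint
union `I(⟨σ⟩, τ ∖ {x₀}) ⊔ I(⟨σ⟩ + x₀, τ)`, according to whether an element includes the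
letter `x₀` or not. -/
theorem interval_free_subposet_disjoint_union {k n : ℕ} (hkn : k < n)
    (σ : Equiv.Perm (Fin k)) (τ : Equiv.Perm (Fin n))
    (f : Fin k → Fin n) (hf : IsOccurrence σ τ f)
    (A : Finset (Fin n)) (hA : A = Finset.image f Finset.univ)
    (x₀ : Fin n) (hx₀ : x₀ ∉ A)
    (hmax : ∀ G G' : Finset (Fin n), IsMaxSimilarGroup τ A G → IsMaxSimilarGroup τ A G' →
      ∀ p ∈ G, ∀ q ∈ G', p = q ∨ SameRegion A p q)
    (hxnotsim : ∀ q : Fin n, ¬ SimilarPos τ A x₀ q ∧ ¬ SimilarPos τ A q x₀) :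
    ∃ e : {q : OccPoset τ A Finset.univ // occIntervalFree τ A Finset.univ q} ≃
        ({q : OccPoset τ A (Finset.univ.erase x₀) //
            occIntervalFree τ A (Finset.univ.erase x₀) q} ⊕
         {q : OccPoset τ (insert x₀ A) Finset.univ //
            occIntervalFree τ (insert x₀ A) Finset.univ q}),
      (∀ q p, e q = Sum.inl p →
        ∃ S : OccCarrier A Finset.univ, q.1 = occMk τ A Finset.univ S ∧ x₀ ∉ S.1) ∧
      (∀ q p, e q = Sum.inr p →
        ∃ S : OccCarrier A Finset.univ, q.1 = occMk τ A Finset.univ S ∧ x₀ ∈ S.1) ∧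
      (∀ q, Even (occRank τ A Finset.univ k q.1) ↔
        Sum.elim (fun p => Even (occRank τ A (Finset.univ.erase x₀) k p.1))
          (fun p => Even (occRank τ (insert x₀ A) Finset.univ k p.1)) (e q)) := by
  classical
  refine ⟨(Equiv.subtypeEquiv (PhiEquiv τ A x₀ hx₀ hxnotsim)
      (freeIff τ A x₀ hx₀ hxnotsim)).trans
      (Equiv.subtypeSum (p := Sum.elim (occIntervalFree τ A (Finset.univ.erase x₀))
        (occIntervalFree τ (insert x₀ A) Finset.univ))), ?_, ?_, ?_⟩
  · intro q p hqp
    erw [Equiv.trans_apply] at hqp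
    have h3 : Phi τ A x₀ hx₀ hxnotsim q.1 = Sum.inl p.1 := subtypeSum_eq_inl _ _ hqp
    obtain ⟨S, hS⟩ := Quot.exists_rep q.1
    by_cases hx : x₀ ∈ S.1
    · exfalso
      rw [← hS] at h3
      have h4 : PhiRep τ A x₀ S = Sum.inl p.1 := h3
      rw [PhiRep.eq_def, dif_pos hx] at h4
      cases h4
    · exact ⟨S, hS.symm, hx⟩
  · intro q p hqp
    erw [Equiv.trans_apply] at hqp
    have h3 : Phi τ A x₀ hx₀ hxnotsim q.1 = Sum.inr p.1 := subtypeSum_eq_inr _ _ hqp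
    obtain ⟨S, hS⟩ := Quot.exists_rep q.1
    by_cases hx : x₀ ∈ S.1
    · exact ⟨S, hS.symm, hx⟩
    · exfalso
      rw [← hS] at h3
      have h4 : PhiRep τ A x₀ S = Sum.inr p.1 := h3
      rw [PhiRep.eq_def, dif_neg hx] at h4
      cases h4
  · intro q
    erw [Equiv.trans_apply]
    set c := ((PhiEquiv τ A x₀ hx₀ hxnotsim).subtypeEquiv
      (freeIff τ A x₀ hx₀ hxnotsim)) q with hc
    obtain ⟨S, hS⟩ := Quot.exists_rep q.1
    have hrank : occRank τ A Finset.univ k q.1 = S.1.card - k := by rw [← hS]; rfl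
    rcases hE : Equiv.subtypeSum c with x | x
    · have h3 : Phi τ A x₀ hx₀ hxnotsim q.1 = Sum.inl x.1 := subtypeSum_eq_inl _ _ hE
      rw [← hS] at h3
      have h4 : PhiRep τ A x₀ S = Sum.inl x.1 := h3
      by_cases hx : x₀ ∈ S.1
      · rw [PhiRep.eq_def, dif_pos hx] at h4
        cases h4
      · rw [PhiRep.eq_def, dif_neg hx] at h4
        have h5 := Sum.inl.inj h4
        erw [Sum.elim_inl]; rw [hrank, ← h5]
        exact Iff.rfl
    · have h3 : Phi τ A x₀ hx₀ hxnotsim q.1 = Sum.inr x.1 := subtypeSum_eq_inr _ _ hE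
      rw [← hS] at h3
      have h4 : PhiRep τ A x₀ S = Sum.inr x.1 := h3
      by_cases hx : x₀ ∈ S.1
      · rw [PhiRep.eq_def, dif_pos hx] at h4
        have h5 := Sum.inr.inj h4
        erw [Sum.elim_inr]; rw [hrank, ← h5]
        exact Iff.rfl
      · rw [PhiRep.eq_def, dif_neg hx] at h4
        cases h4
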